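/- Let C ⊆ F_2^n be a binary linear code with minimum distance at least 2t+1, and let u > t. Then the number of vectors y in F_2^n with wt(y) = u that lie at Hamming distance greater than t from every codeword of C equals C(n,u) − Σ_{r=u−t}^{u+t} A_r · Σ_{(a,b)} C(r,a)·C(n−r,b), where for each r the inner sum is over all pairs of natural numbers (a,b) with a + b ≤ t and u + a = r + b. -/

import Mathlib

open Finset

variable {n : ℕ}

def supp (y : Fin n → ZMod 2) : Finset (Fin n) := univ.filter (fun i => y i ≠ 0)

def ind (s : Finset (Fin n)) : Fin n → ZMod 2 := fun i => if i ∈ s then 1 else 0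

lemma mem_supp {y : Fin n → ZMod 2} {i : Fin n} : i ∈ supp y ↔ y i ≠ 0 := by
  simp [supp]

lemma norm_eq_card_supp (y : Fin n → ZMod 2) : hammingNorm y = (supp y).card := rfl

lemma supp_ind (s : Finset (Fin n)) : supp (ind s) = s := by
  ext i; by_cases h : i ∈ s <;> simp [supp, ind, h]

lemma ind_supp (y : Fin n → ZMod 2) : ind (supp y) = y := by
  funext i
  have : y i = 0 ∨ y i = 1 := by
    generalize y i = a; revert a; decide
  rcases this with h | h <;> simp [ind, mem_supp, h]

lemma dist_split (y c : Fin n → ZMod 2) :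
    hammingDist y c = (supp c \ supp y).card + (supp y \ supp c).card := by
  rw [← card_union_of_disjoint disjoint_sdiff_sdiff]
  unfold hammingDist
  congr 1
  ext i
  simp only [mem_filter, mem_univ, true_and, mem_union, mem_sdiff, mem_supp]
  generalize y i = a; generalize c i = b
  revert a b; decide

lemma countA (t u : ℕ) (c : Fin n → ZMod 2) :
    (univ.filter (fun y : Fin n → ZMod 2 =>
        hammingNorm y = u ∧ hammingDist y c ≤ t)).card
      = ∑ ab ∈ (Finset.range (t + 1) ×ˢ Finset.range (t + 1)).filter
            (fun ab => ab.1 + ab.2 ≤ t ∧ u + ab.1 = hammingNorm c + ab.2),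
          (hammingNorm c).choose ab.1 * (n - hammingNorm c).choose ab.2 := by
  set s := supp c with hs
  have hr : hammingNorm c = s.card := rfl
  set F := (Finset.range (t + 1) ×ˢ Finset.range (t + 1)).filter
      (fun ab => ab.1 + ab.2 ≤ t ∧ u + ab.1 = hammingNorm c + ab.2) with hF
  have hcard : (univ.filter (fun y : Fin n → ZMod 2 =>
      hammingNorm y = u ∧ hammingDist y c ≤ t)).card
      = (F.biUnion (fun ab => powersetCard ab.1 s ×ˢ powersetCard ab.2 sᶜ)).card := by
    apply Finset.card_bij' (fun y _ => (s \ supp y, supp y \ s))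
      (fun p _ => ind ((s \ p.1) ∪ p.2))
    · intro y hy
      simp only [mem_filter, mem_univ, true_and] at hy
      have h1 : (s ∩ supp y).card + (s \ supp y).card = s.card :=
        card_inter_add_card_sdiff s (supp y)
      have h2 : (supp y ∩ s).card + (supp y \ s).card = (supp y).card :=
        card_inter_add_card_sdiff (supp y) s
      rw [inter_comm] at h2
      have hwt : (supp y).card = u := hy.1
      have hd : (s \ supp y).card + (supp y \ s).card ≤ t := by
        rw [← dist_split y c]; exact hy.2
      apply mem_biUnion.2
      refine ⟨((s \ supp y).card, (supp y \ s).card), ?_, ?_⟩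
      · simp only [hF, mem_filter, mem_product, mem_range]
        refine ⟨⟨by omega, by omega⟩, by omega, by omega⟩
      · simp only [mem_product, mem_powersetCard]
        exact ⟨⟨sdiff_subset, trivial⟩, fun i hi => mem_compl.2 (mem_sdiff.1 hi).2, trivial⟩
    · intro p hp
      obtain ⟨ab, habF, hmem⟩ := mem_biUnion.1 hp
      simp only [mem_product, mem_powersetCard] at hmem
      obtain ⟨⟨hA, ha⟩, hB, hb⟩ := hmem
      simp only [hF, mem_filter, mem_product, mem_range] at habF
      have hBs : ∀ i ∈ p.2, i ∉ s := fun i h => mem_compl.1 (hB h)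
      have id1 : s \ ((s \ p.1) ∪ p.2) = p.1 := by
        ext i
        simp only [mem_sdiff, mem_union, not_or, not_and, not_not]
        constructor
        · rintro ⟨hi, h4, _⟩; exact h4 hi
        · intro hi; exact ⟨hA hi, fun _ => hi, fun h => hBs _ h (hA hi)⟩
      have id2 : ((s \ p.1) ∪ p.2) \ s = p.2 := by
        ext i
        simp only [mem_sdiff, mem_union]
        constructor
        · rintro ⟨h1 | h2, hns⟩
          · exact absurd h1.1 hns
          · exact h2
        · intro hi; exact ⟨Or.inr hi, hBs _ hi⟩
      have hsupp : supp (ind ((s \ p.1) ∪ p.2)) = (s \ p.1) ∪ p.2 := supp_ind _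
      have hdisj : Disjoint (s \ p.1) p.2 :=
        Finset.disjoint_left.2 fun i h1 h2 => hBs _ h2 (mem_sdiff.1 h1).1
      have hAle : p.1.card ≤ s.card := card_le_card hA
      simp only [mem_filter, mem_univ, true_and]
      constructor
      · rw [norm_eq_card_supp, hsupp, card_union_of_disjoint hdisj, card_sdiff_of_subset hA, ha, hb]
        omega
      · rw [dist_split _ c, ← hs, hsupp, id1, id2, ha, hb]
        omega
    · intro y hy
      have : (s \ (s \ supp y)) ∪ (supp y \ s) = supp y := by
        ext i
        simp only [mem_union, mem_sdiff, not_and, not_not]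
        constructor
        · rintro (⟨hi, h2⟩ | h2)
          · exact h2 hi
          · exact h2.1
        · intro hi
          by_cases h : i ∈ s
          · exact Or.inl ⟨h, fun _ => hi⟩
          · exact Or.inr ⟨hi, h⟩
      rw [this, ind_supp]
    · intro p hp
      obtain ⟨ab, habF, hmem⟩ := mem_biUnion.1 hp
      simp only [mem_product, mem_powersetCard] at hmem
      obtain ⟨⟨hA, _⟩, hB, _⟩ := hmem
      have hBs : ∀ i ∈ p.2, i ∉ s := fun i h => mem_compl.1 (hB h)
      have id1 : s \ ((s \ p.1) ∪ p.2) = p.1 := by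
        ext i
        simp only [mem_sdiff, mem_union, not_or, not_and, not_not]
        constructor
        · rintro ⟨hi, h4, _⟩; exact h4 hi
        · intro hi; exact ⟨hA hi, fun _ => hi, fun h => hBs _ h (hA hi)⟩
      have id2 : ((s \ p.1) ∪ p.2) \ s = p.2 := by
        ext i
        simp only [mem_sdiff, mem_union]
        constructor
        · rintro ⟨h1 | h2, hns⟩
          · exact absurd h1.1 hns
          · exact h2
        · intro hi; exact ⟨Or.inr hi, hBs _ hi⟩
      rw [supp_ind]
      exact Prod.ext id1 id2
  rw [hcard, card_biUnion]
  · apply sum_congr rfl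
    intro ab _
    rw [card_product, card_powersetCard, card_powersetCard, card_compl, ← hr]
    simp
  · intro x _ y _ hxy
    rw [Function.onFun, Finset.disjoint_left]
    intro p hpx hpy
    simp only [mem_product, mem_powersetCard] at hpx hpy
    exact hxy (Prod.ext (hpx.1.2 ▸ hpy.1.2.symm ▸ rfl) (hpx.2.2 ▸ hpy.2.2.symm ▸ rfl))

/-- For a binary linear code `C ⊆ 𝔽₂ⁿ` with minimum distance at least
`2t+1`, and `u > t`, the number of vectors `y` with `wt(y) = u` at Hamming distance
greater than `t` from every codeword equals
`C(n,u) − ∑_{r=u−t}^{u+t} A_r · ∑_{(a,b) : a+b ≤ t, u+a = r+b} C(r,a)·C(n−r,b)`. -/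
theorem bdd_failure_count (n t u : ℕ)
    (C : Submodule (ZMod 2) (Fin n → ZMod 2)) [DecidablePred (· ∈ C)]
    (hdmin : ∀ c ∈ C, c ≠ 0 → 2 * t + 1 ≤ hammingNorm c)
    (hu : t < u) :
    (Finset.univ.filter (fun y : Fin n → ZMod 2 =>
        hammingNorm y = u ∧ ∀ c ∈ C, t < hammingDist y c)).card =
      n.choose u -
        ∑ r ∈ Finset.Icc (u - t) (u + t),
          (Finset.univ.filter
              (fun c : Fin n → ZMod 2 => c ∈ C ∧ hammingNorm c = r)).card *
            ∑ ab ∈ (Finset.range (t + 1) ×ˢ Finset.range (t + 1)).filter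
                (fun ab => ab.1 + ab.2 ≤ t ∧ u + ab.1 = r + ab.2),
              r.choose ab.1 * (n - r).choose ab.2 := by
  classical
  set g : ℕ → ℕ := fun r =>
    ∑ ab ∈ (Finset.range (t + 1) ×ˢ Finset.range (t + 1)).filter
        (fun ab => ab.1 + ab.2 ≤ t ∧ u + ab.1 = r + ab.2),
      r.choose ab.1 * (n - r).choose ab.2 with hg
  -- total count of weight-u vectors
  have htot : (univ.filter (fun y : Fin n → ZMod 2 => hammingNorm y = u)).card
      = n.choose u := by
    have h : (univ.filter (fun y : Fin n → ZMod 2 => hammingNorm y = u)).card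
        = (powersetCard u (univ : Finset (Fin n))).card := by
      apply card_bij' (fun y _ => supp y) (fun p _ => ind p)
      · intro y hy
        simp only [mem_filter] at hy
        rw [mem_powersetCard]
        exact ⟨subset_univ _, hy.2⟩
      · intro p hp
        simp only [mem_filter, mem_univ, true_and]
        rw [norm_eq_card_supp, supp_ind]
        exact (mem_powersetCard.1 hp).2
      · intro y _; exact ind_supp y
      · intro p _; exact supp_ind p
    rw [h, card_powersetCard]; simp
  -- split into fail / good
  have hsplit := Finset.card_filter_add_card_filter_not
    (s := univ.filter (fun y : Fin n → ZMod 2 => hammingNorm y = u))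
    (p := fun y => ∀ c ∈ C, t < hammingDist y c)
  rw [filter_filter, filter_filter] at hsplit
  set Cfin := univ.filter (fun c : Fin n → ZMod 2 => c ∈ C) with hCfin
  -- good set as disjoint union over codewords
  have hG : (univ.filter (fun y : Fin n → ZMod 2 =>
        hammingNorm y = u ∧ ¬ ∀ c ∈ C, t < hammingDist y c))
      = Cfin.biUnion (fun c => univ.filter (fun y : Fin n → ZMod 2 =>
          hammingNorm y = u ∧ hammingDist y c ≤ t)) := by
    ext y
    simp only [mem_filter, mem_univ, true_and, mem_biUnion, not_forall, not_lt,
      exists_prop, hCfin]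
    tauto
  have hdisj : ∀ c₁ ∈ Cfin, ∀ c₂ ∈ Cfin, c₁ ≠ c₂ →
      Disjoint (univ.filter (fun y : Fin n → ZMod 2 =>
          hammingNorm y = u ∧ hammingDist y c₁ ≤ t))
        (univ.filter (fun y : Fin n → ZMod 2 =>
          hammingNorm y = u ∧ hammingDist y c₂ ≤ t)) := by
    intro c₁ hc₁ c₂ hc₂ hne
    rw [Finset.disjoint_left]
    intro y hy₁ hy₂
    simp only [mem_filter, mem_univ, true_and, hCfin] at hy₁ hy₂ hc₁ hc₂
    have htri : hammingDist c₁ c₂ ≤ hammingDist c₁ y + hammingDist y c₂ :=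
      hammingDist_triangle c₁ y c₂
    rw [hammingDist_comm c₁ y] at htri
    have hmem : c₁ - c₂ ∈ C := sub_mem hc₁ hc₂
    have hne0 : c₁ - c₂ ≠ 0 := sub_ne_zero.2 hne
    have := hdmin _ hmem hne0
    rw [← neg_add_eq_sub, ← hammingDist_eq_hammingNorm, hammingDist_comm] at this
    omega
  have hGcard : (univ.filter (fun y : Fin n → ZMod 2 =>
        hammingNorm y = u ∧ ¬ ∀ c ∈ C, t < hammingDist y c)).card
      = ∑ c ∈ Cfin, g (hammingNorm c) := by
    rw [hG, card_biUnion hdisj]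
    exact sum_congr rfl fun c _ => countA t u c
  -- vanishing outside the Icc
  have hvanish : ∀ r, r ∉ Finset.Icc (u - t) (u + t) → g r = 0 := by
    intro r hr
    rw [mem_Icc] at hr
    rw [hg]
    have : ((Finset.range (t + 1) ×ˢ Finset.range (t + 1)).filter
        (fun ab => ab.1 + ab.2 ≤ t ∧ u + ab.1 = r + ab.2)) = ∅ := by
      rw [Finset.filter_eq_empty_iff]
      intro ab hab
      simp only [mem_product, mem_range] at hab
      omega
    simp only [this, sum_empty]
  -- regroup by weight
  have hregroup : ∑ c ∈ Cfin, g (hammingNorm c)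
      = ∑ r ∈ Finset.Icc (u - t) (u + t),
          (univ.filter (fun c : Fin n → ZMod 2 => c ∈ C ∧ hammingNorm c = r)).card * g r := by
    set S := Cfin.filter (fun c => hammingNorm c ∈ Finset.Icc (u - t) (u + t)) with hS
    have h1 : ∑ c ∈ Cfin, g (hammingNorm c) = ∑ c ∈ S, g (hammingNorm c) := by
      refine (Finset.sum_subset (filter_subset _ _) ?_).symm
      intro c _ hcs
      apply hvanish
      intro hmem
      exact hcs (mem_filter.2 ⟨by assumption, hmem⟩)
    have h2 : ∑ r ∈ Finset.Icc (u - t) (u + t),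
          ∑ c ∈ S.filter (fun c => hammingNorm c = r), g (hammingNorm c)
        = ∑ c ∈ S, g (hammingNorm c) :=
      Finset.sum_fiberwise_of_maps_to (fun c hc => (mem_filter.1 hc).2) _
    rw [h1, ← h2]
    apply sum_congr rfl
    intro r hr
    have hfib : S.filter (fun c => hammingNorm c = r)
        = univ.filter (fun c : Fin n → ZMod 2 => c ∈ C ∧ hammingNorm c = r) := by
      ext c
      simp only [hS, hCfin, mem_filter, mem_univ, true_and]
      constructor
      · rintro ⟨⟨h1, _⟩, h3⟩; exact ⟨h1, h3⟩
      · rintro ⟨h1, h2⟩; exact ⟨⟨h1, h2 ▸ hr⟩, h2⟩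
    rw [hfib]
    calc ∑ c ∈ univ.filter (fun c : Fin n → ZMod 2 => c ∈ C ∧ hammingNorm c = r),
          g (hammingNorm c)
        = ∑ _c ∈ univ.filter (fun c : Fin n → ZMod 2 => c ∈ C ∧ hammingNorm c = r), g r := by
          apply sum_congr rfl; intro c hc; rw [(mem_filter.1 hc).2.2]
      _ = _ := by rw [sum_const, smul_eq_mul]
  have hfinal : ∑ r ∈ Finset.Icc (u - t) (u + t),
      (univ.filter (fun c : Fin n → ZMod 2 => c ∈ C ∧ hammingNorm c = r)).card * g r
      = ∑ r ∈ Finset.Icc (u - t) (u + t),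
          (univ.filter (fun c : Fin n → ZMod 2 => c ∈ C ∧ hammingNorm c = r)).card *
            ∑ ab ∈ (Finset.range (t + 1) ×ˢ Finset.range (t + 1)).filter
                (fun ab => ab.1 + ab.2 ≤ t ∧ u + ab.1 = r + ab.2),
              r.choose ab.1 * (n - r).choose ab.2 := rfl
  omega
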